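/- Let A ∈ ℝ^{n×d} and Q ∈ ℝ^{m×n}, let C = {λ ∈ ℝ^{m×d} : ‖λ_k‖₂ ≤ 1 for all rows k}, and let D(λ) = ⟨Qᵀλ, A⟩_F − (1/4)‖Qᵀλ‖_F². Suppose λ* ∈ C maximizes D over C. Then the matrix X* := A − (1/2)Qᵀλ* minimizes the convex clustering primal objective P(X) = ‖X − A‖_F² + ∑_{k=1}^{m} ‖(QX)_k‖₂ over all X ∈ ℝ^{n×d}, and moreover P(X*) = D(λ*). (Strong duality and primal recovery for convex clustering, the instantiation of Theorem 1 with f(X;A) = ‖X − A‖_F² and p = q = 2.) -/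

import Mathlib

open Matrix

noncomputable def enorm {d : ℕ} (v : Fin d → ℝ) : ℝ := Real.sqrt (∑ j, v j ^ 2)

lemma enorm_eq_norm {d : ℕ} (v : Fin d → ℝ) :
    _root_.enorm v = ‖WithLp.toLp 2 v‖ := by
  rw [EuclideanSpace.norm_eq]
  simp [_root_.enorm, sq_abs]

lemma enorm_nonneg' {d : ℕ} (v : Fin d → ℝ) : 0 ≤ _root_.enorm v := Real.sqrt_nonneg _

lemma enorm_triangle {d : ℕ} (v w : Fin d → ℝ) :
    _root_.enorm (fun j => v j + w j) ≤ _root_.enorm v + _root_.enorm w := by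
  rw [enorm_eq_norm, enorm_eq_norm, enorm_eq_norm]
  have := norm_add_le (WithLp.toLp 2 v) (WithLp.toLp 2 w)
  rw [← WithLp.toLp_add] at this
  exact this

lemma enorm_smul' {d : ℕ} (c : ℝ) (v : Fin d → ℝ) :
    _root_.enorm (fun j => c * v j) = |c| * _root_.enorm v := by
  rw [enorm_eq_norm, enorm_eq_norm]
  have := norm_smul c (WithLp.toLp 2 v)
  rw [← WithLp.toLp_smul] at this
  exact this

lemma inner_le_enorm_mul {d : ℕ} (v w : Fin d → ℝ) :
    ∑ j, v j * w j ≤ _root_.enorm v * _root_.enorm w := by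
  have h := real_inner_le_norm (WithLp.toLp 2 v) (WithLp.toLp 2 w)
  rw [← enorm_eq_norm, ← enorm_eq_norm] at h
  simpa [PiLp.inner_apply, RCLike.inner_apply, mul_comm] using h

lemma sum2_congr {a b : ℕ} (f g : Fin a → Fin b → ℝ) (h : ∀ i j, f i j = g i j) :
    (∑ i, ∑ j, f i j) = ∑ i, ∑ j, g i j :=
  Finset.sum_congr rfl fun i _ => Finset.sum_congr rfl fun j _ => h i j

lemma sum2_add {a b : ℕ} (f g : Fin a → Fin b → ℝ) :
    (∑ i, ∑ j, (f i j + g i j)) = (∑ i, ∑ j, f i j) + ∑ i, ∑ j, g i j := by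
  simp [Finset.sum_add_distrib]

lemma sum2_sub {a b : ℕ} (f g : Fin a → Fin b → ℝ) :
    (∑ i, ∑ j, (f i j - g i j)) = (∑ i, ∑ j, f i j) - ∑ i, ∑ j, g i j := by
  simp [Finset.sum_sub_distrib]

lemma sum2_mul {a b : ℕ} (c : ℝ) (f : Fin a → Fin b → ℝ) :
    (∑ i, ∑ j, c * f i j) = c * ∑ i, ∑ j, f i j := by
  simp [Finset.mul_sum]

lemma sum2_nonneg_sq {a b : ℕ} (f : Fin a → Fin b → ℝ) :
    0 ≤ ∑ i, ∑ j, (f i j) ^ 2 :=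
  Finset.sum_nonneg fun i _ => Finset.sum_nonneg fun j _ => sq_nonneg _

lemma ip_trace {a b : ℕ} (U V : Matrix (Fin a) (Fin b) ℝ) :
    ∑ i, ∑ j, U i j * V i j = Matrix.trace (U * Vᵀ) := by
  simp [Matrix.trace, Matrix.mul_apply, Matrix.diag, Matrix.transpose_apply]

lemma adj {n d m : ℕ} (Q : Matrix (Fin m) (Fin n) ℝ) (l : Matrix (Fin m) (Fin d) ℝ)
    (X : Matrix (Fin n) (Fin d) ℝ) :
    (∑ i, ∑ j, (Qᵀ * l) i j * X i j) = ∑ k, ∑ j, l k j * (Q * X) k j := by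
  rw [ip_trace, ip_trace, Matrix.transpose_mul, Matrix.mul_assoc,
    Matrix.trace_mul_comm, Matrix.mul_assoc]

/-- **Strong duality and primal recovery for convex clustering.**
If `l∗` maximizes the dual function `D(l) = ⟨Qᵀl, A⟩_F − (1/4)‖Qᵀl‖_F²` over the
dual feasible set `C = {l : ‖lₖ‖₂ ≤ 1 ∀k}`, then `X∗ = A − (1/2)Qᵀl∗` minimizes
the convex clustering primal objective
`P(X) = ‖X − A‖_F² + ∑ₖ ‖(QX)ₖ‖₂`, and `P(X∗) = D(l∗)`. -/
theorem strong_duality_convex_clustering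
    (n d m : ℕ)
    (A : Matrix (Fin n) (Fin d) ℝ)
    (Q : Matrix (Fin m) (Fin n) ℝ)
    (lstar : Matrix (Fin m) (Fin d) ℝ)
    (hfeas : ∀ k : Fin m, Real.sqrt (∑ j, (lstar k j) ^ 2) ≤ 1)
    (hmax : ∀ l : Matrix (Fin m) (Fin d) ℝ,
      (∀ k : Fin m, Real.sqrt (∑ j, (l k j) ^ 2) ≤ 1) →
      (∑ i, ∑ j, (Qᵀ * l) i j * A i j) - (1 / 4) * ∑ i, ∑ j, ((Qᵀ * l) i j) ^ 2
        ≤ (∑ i, ∑ j, (Qᵀ * lstar) i j * A i j)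
            - (1 / 4) * ∑ i, ∑ j, ((Qᵀ * lstar) i j) ^ 2) :
    (∀ X : Matrix (Fin n) (Fin d) ℝ,
        (∑ i, ∑ j, ((A - (1 / 2 : ℝ) • (Qᵀ * lstar)) i j - A i j) ^ 2)
            + ∑ k, Real.sqrt (∑ j, ((Q * (A - (1 / 2 : ℝ) • (Qᵀ * lstar))) k j) ^ 2)
          ≤ (∑ i, ∑ j, (X i j - A i j) ^ 2)
              + ∑ k, Real.sqrt (∑ j, ((Q * X) k j) ^ 2))
    ∧ (∑ i, ∑ j, ((A - (1 / 2 : ℝ) • (Qᵀ * lstar)) i j - A i j) ^ 2)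
          + ∑ k, Real.sqrt (∑ j, ((Q * (A - (1 / 2 : ℝ) • (Qᵀ * lstar))) k j) ^ 2)
        = (∑ i, ∑ j, (Qᵀ * lstar) i j * A i j)
            - (1 / 4) * ∑ i, ∑ j, ((Qᵀ * lstar) i j) ^ 2 := by
  classical
  set B : Matrix (Fin n) (Fin d) ℝ := Qᵀ * lstar with hBdef
  set Xs : Matrix (Fin n) (Fin d) ℝ := A - (1 / 2 : ℝ) • B with hXsdef
  -- entrywise descriptions
  have hXe : ∀ i j, Xs i j = A i j - (1 / 2) * B i j := by
    intro i j
    simp [hXsdef, Matrix.sub_apply, Matrix.smul_apply, smul_eq_mul]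
  -- per-row Cauchy–Schwarz with feasibility
  have rowCS : ∀ (l : Matrix (Fin m) (Fin d) ℝ),
      (∀ k, Real.sqrt (∑ j, (l k j) ^ 2) ≤ 1) →
      ∀ Y : Matrix (Fin m) (Fin d) ℝ,
        (∑ k, ∑ j, l k j * Y k j) ≤ ∑ k, Real.sqrt (∑ j, (Y k j) ^ 2) := by
    intro l hl Y
    apply Finset.sum_le_sum
    intro k _
    calc (∑ j, l k j * Y k j) ≤ _root_.enorm (l k) * _root_.enorm (Y k) := inner_le_enorm_mul _ _
      _ ≤ 1 * _root_.enorm (Y k) :=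
          mul_le_mul_of_nonneg_right (hl k) (enorm_nonneg' _)
      _ = Real.sqrt (∑ j, (Y k j) ^ 2) := by rw [one_mul]; rfl
  -- completing the square
  have csq : ∀ X : Matrix (Fin n) (Fin d) ℝ,
      (∑ i, ∑ j, (X i j - A i j) ^ 2) + (∑ i, ∑ j, B i j * X i j)
        = ((∑ i, ∑ j, B i j * A i j) - (1 / 4) * ∑ i, ∑ j, (B i j) ^ 2)
            + ∑ i, ∑ j, (X i j - A i j + (1 / 2) * B i j) ^ 2 := by
    intro X
    have h := sum2_congr (fun i j => (X i j - A i j + (1 / 2) * B i j) ^ 2)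
      (fun i j => (X i j - A i j) ^ 2
        + (B i j * X i j - (B i j * A i j - (1 / 4) * (B i j) ^ 2)))
      (fun i j => by ring)
    rw [h, sum2_add, sum2_sub, sum2_sub, sum2_mul]
    ring
  -- ⟨B, X⟩ via adjoint
  have hadjB : ∀ X : Matrix (Fin n) (Fin d) ℝ,
      (∑ i, ∑ j, B i j * X i j) = ∑ k, ∑ j, lstar k j * (Q * X) k j := by
    intro X
    rw [hBdef]
    exact adj Q lstar X
  -- define lhat : normalized rows of Q * Xs
  set M : Matrix (Fin m) (Fin d) ℝ := Q * Xs with hMdef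
  set lhat : Matrix (Fin m) (Fin d) ℝ :=
    Matrix.of (fun k j =>
      if Real.sqrt (∑ j', (M k j') ^ 2) = 0 then 0
      else M k j / Real.sqrt (∑ j', (M k j') ^ 2)) with hlhatdef
  have hsum_nonneg : ∀ k, (0 : ℝ) ≤ ∑ j, (M k j) ^ 2 :=
    fun k => Finset.sum_nonneg fun j _ => sq_nonneg _
  have hlhat_feas : ∀ k, Real.sqrt (∑ j, (lhat k j) ^ 2) ≤ 1 := by
    intro k
    by_cases h : Real.sqrt (∑ j', (M k j') ^ 2) = 0
    · simp [hlhatdef, Matrix.of_apply, h]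
    · have hsne : (∑ j', (M k j') ^ 2) ≠ 0 := by
        intro h0; exact h (by rw [h0, Real.sqrt_zero])
      have hs : Real.sqrt (∑ j', (M k j') ^ 2) ^ 2 = ∑ j', (M k j') ^ 2 :=
        Real.sq_sqrt (hsum_nonneg k)
      have hval : (∑ j, (lhat k j) ^ 2) = 1 := by
        simp only [hlhatdef, Matrix.of_apply, if_neg h, div_pow]
        rw [← Finset.sum_div, hs, div_self hsne]
      rw [hval, Real.sqrt_one]
  have hlhat_inner : ∀ k,
      (∑ j, lhat k j * M k j) = Real.sqrt (∑ j, (M k j) ^ 2) := by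
    intro k
    by_cases h : Real.sqrt (∑ j', (M k j') ^ 2) = 0
    · simp only [hlhatdef, Matrix.of_apply, if_pos h, zero_mul,
        Finset.sum_const_zero]
      exact h.symm
    · have hs : Real.sqrt (∑ j', (M k j') ^ 2) ^ 2 = ∑ j', (M k j') ^ 2 :=
        Real.sq_sqrt (hsum_nonneg k)
      simp only [hlhatdef, Matrix.of_apply, if_neg h]
      have : ∀ j, M k j / Real.sqrt (∑ j', (M k j') ^ 2) * M k j
          = (M k j) ^ 2 / Real.sqrt (∑ j', (M k j') ^ 2) := by
        intro j; ring
      rw [Finset.sum_congr rfl fun j _ => this j, ← Finset.sum_div]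
      exact Real.div_sqrt
  -- the perturbation direction
  set E : Matrix (Fin n) (Fin d) ℝ := Qᵀ * lhat - B with hEdef
  have hnE : (0 : ℝ) ≤ ∑ i, ∑ j, (E i j) ^ 2 := sum2_nonneg_sq _
  -- variational inequality from maximality
  have key : ∀ t : ℝ, 0 < t → t ≤ 1 →
      t * (∑ i, ∑ j, E i j * Xs i j)
        ≤ t ^ 2 / 4 * ∑ i, ∑ j, (E i j) ^ 2 := by
    intro t ht ht1
    set lt : Matrix (Fin m) (Fin d) ℝ := lstar + t • (lhat - lstar) with hltdef
    have hrow : ∀ k j, lt k j = (1 - t) * lstar k j + t * lhat k j := by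
      intro k j
      simp [hltdef, Matrix.add_apply, Matrix.smul_apply, Matrix.sub_apply,
        smul_eq_mul]
      ring
    have hltfeas : ∀ k, Real.sqrt (∑ j, (lt k j) ^ 2) ≤ 1 := by
      intro k
      have h0 : Real.sqrt (∑ j, (lt k j) ^ 2)
          = _root_.enorm (fun j => (1 - t) * lstar k j + t * lhat k j) := by
        show _ = Real.sqrt _
        congr 1
        exact Finset.sum_congr rfl fun j _ => by rw [hrow]
      rw [h0]
      calc _root_.enorm (fun j => (1 - t) * lstar k j + t * lhat k j)
          ≤ _root_.enorm (fun j => (1 - t) * lstar k j) + _root_.enorm (fun j => t * lhat k j) :=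
            enorm_triangle _ _
        _ = |1 - t| * _root_.enorm (lstar k) + |t| * _root_.enorm (lhat k) := by
            rw [enorm_smul', enorm_smul']
        _ ≤ (1 - t) * 1 + t * 1 := by
            rw [abs_of_nonneg (by linarith), abs_of_nonneg ht.le]
            exact add_le_add
              (mul_le_mul_of_nonneg_left (hfeas k) (by linarith))
              (mul_le_mul_of_nonneg_left (hlhat_feas k) ht.le)
        _ = 1 := by ring
    have h := hmax lt hltfeas
    have hQlt : Qᵀ * lt = B + t • E := by
      rw [hltdef, Matrix.mul_add, Matrix.mul_smul, Matrix.mul_sub, hEdef, hBdef]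
    rw [hQlt] at h
    have hadd : ∀ i j, (B + t • E) i j = B i j + t * E i j := by
      intro i j
      simp [Matrix.add_apply, Matrix.smul_apply, smul_eq_mul]
    have e1 : (∑ i, ∑ j, (B + t • E) i j * A i j)
        = (∑ i, ∑ j, B i j * A i j) + t * ∑ i, ∑ j, E i j * A i j := by
      rw [sum2_congr _ (fun i j => B i j * A i j + t * (E i j * A i j))
        (fun i j => by rw [hadd]; ring), sum2_add, sum2_mul]
    have e2 : (∑ i, ∑ j, ((B + t • E) i j) ^ 2)
        = (∑ i, ∑ j, (B i j) ^ 2)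
          + ((t * 2) * (∑ i, ∑ j, E i j * B i j)
            + t ^ 2 * ∑ i, ∑ j, (E i j) ^ 2) := by
      rw [sum2_congr _ (fun i j => (B i j) ^ 2
          + ((t * 2) * (E i j * B i j) + t ^ 2 * (E i j) ^ 2))
        (fun i j => by rw [hadd]; ring), sum2_add, sum2_add, sum2_mul, sum2_mul]
    rw [e1, e2] at h
    have e3 : (∑ i, ∑ j, E i j * Xs i j)
        = (∑ i, ∑ j, E i j * A i j) - (1 / 2) * ∑ i, ∑ j, E i j * B i j := by
      rw [sum2_congr _ (fun i j => E i j * A i j - (1 / 2) * (E i j * B i j))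
        (fun i j => by rw [hXe]; ring), sum2_sub, sum2_mul]
    rw [e3]
    nlinarith [h]
  -- conclude ⟨E, Xs⟩ ≤ 0
  have ha : (∑ i, ∑ j, E i j * Xs i j) ≤ 0 := by
    by_contra hc
    push_neg at hc
    set a := ∑ i, ∑ j, E i j * Xs i j with hadef
    set c := ∑ i, ∑ j, (E i j) ^ 2 with hcdef
    have ht0pos : 0 < min 1 (a / (c + 1)) :=
      lt_min one_pos (div_pos hc (by linarith))
    have h := key _ ht0pos (min_le_left _ _)
    have h3 : min 1 (a / (c + 1)) * (c + 1) ≤ a := by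
      rw [← le_div_iff₀ (by linarith : (0:ℝ) < c + 1)]
      exact min_le_right _ _
    nlinarith [mul_le_mul_of_nonneg_left h3 ht0pos.le, h,
      mul_pos ht0pos hc, sq_nonneg (min 1 (a / (c + 1)))]
  -- equality of the subgradient terms
  have hge : (∑ k, Real.sqrt (∑ j, (M k j) ^ 2)) ≤ ∑ i, ∑ j, B i j * Xs i j := by
    have hE1 : (∑ i, ∑ j, E i j * Xs i j)
        = (∑ i, ∑ j, (Qᵀ * lhat) i j * Xs i j) - ∑ i, ∑ j, B i j * Xs i j := by
      rw [sum2_congr _ (fun i j => (Qᵀ * lhat) i j * Xs i j - B i j * Xs i j)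
        (fun i j => by rw [hEdef]; simp [Matrix.sub_apply]; ring), sum2_sub]
    have hE2 : (∑ i, ∑ j, (Qᵀ * lhat) i j * Xs i j)
        = ∑ k, Real.sqrt (∑ j, (M k j) ^ 2) := by
      rw [adj Q lhat Xs, ← hMdef]
      exact Finset.sum_congr rfl fun k _ => hlhat_inner k
    rw [hE1, hE2] at ha
    linarith
  have hle : (∑ i, ∑ j, B i j * Xs i j) ≤ ∑ k, Real.sqrt (∑ j, (M k j) ^ 2) := by
    rw [hadjB Xs, ← hMdef]
    exact rowCS lstar hfeas M
  have heq2 : (∑ k, Real.sqrt (∑ j, (M k j) ^ 2)) = ∑ i, ∑ j, B i j * Xs i j :=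
    le_antisymm hge hle
  -- the square term vanishes at Xs
  have hz : (∑ i, ∑ j, (Xs i j - A i j + (1 / 2) * B i j) ^ 2) = 0 := by
    rw [sum2_congr _ (fun _ _ => (0 : ℝ)) (fun i j => by rw [hXe]; ring)]
    simp
  -- main equality
  have main2 : (∑ i, ∑ j, (Xs i j - A i j) ^ 2)
      + (∑ k, Real.sqrt (∑ j, (M k j) ^ 2))
      = (∑ i, ∑ j, B i j * A i j) - (1 / 4) * ∑ i, ∑ j, (B i j) ^ 2 := by
    have := csq Xs
    rw [hz] at this
    rw [heq2]
    linarith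
  refine ⟨?_, main2⟩
  intro X
  rw [show (∑ i, ∑ j, (Xs i j - A i j) ^ 2)
      + (∑ k, Real.sqrt (∑ j, (M k j) ^ 2))
      = (∑ i, ∑ j, B i j * A i j) - (1 / 4) * ∑ i, ∑ j, (B i j) ^ 2 from main2]
  have h1 : (∑ i, ∑ j, B i j * X i j) ≤ ∑ k, Real.sqrt (∑ j, ((Q * X) k j) ^ 2) := by
    rw [hadjB X]
    exact rowCS lstar hfeas (Q * X)
  have h2 := csq X
  have h3 : (0 : ℝ) ≤ ∑ i, ∑ j, (X i j - A i j + (1 / 2) * B i j) ^ 2 :=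
    sum2_nonneg_sq _
  linarith
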